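/- arXiv:2503.18819 — 5 statements merged into one kernel-verified Lean document; each statement's English description precedes it below -/
import Mathlib

section
/- For every integer n ≥ 1 and all real numbers a₀, aₙ with a₀ > aₙ > 0, the polynomial p_n(z) = aₙ·zⁿ + a₀·∑_{j=0}^{n-1} z^j has no zeros in the closed unit disk; that is, for every complex number z with |z| ≤ 1 one has aₙ·zⁿ + a₀·∑_{j=0}^{n-1} z^j ≠ 0. -/
/-- For every integer `n ≥ 1` and all real numbers `a₀ > aₙ > 0`, the polynomial
`pₙ(z) = aₙ·zⁿ + a₀·∑_{j=0}^{n-1} z^j` has no zeros in the closed unit disk. -/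
theorem no_zeros_in_closed_unit_disk (n : ℕ) (hn : 1 ≤ n) (a₀ aN : ℝ)
    (h₁ : a₀ > aN) (h₂ : aN > 0) (z : ℂ) (hz : ‖z‖ ≤ 1) :
    (aN : ℂ) * z ^ n + (a₀ : ℂ) * ∑ j ∈ Finset.range n, z ^ j ≠ 0 := by
  intro h
  by_cases hz1 : z = 1
  · subst hz1
    simp at h
    have hn' : (1:ℝ) ≤ (n:ℝ) := by exact_mod_cast hn
    have : (0:ℝ) < aN + a₀ * n := by nlinarith
    have h' : (aN : ℂ) + a₀ * n = 0 := by push_cast at h ⊢; linear_combination h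
    have := congrArg Complex.re h'
    simp at this
    linarith
  · -- multiply by z - 1
    have hne : z - 1 ≠ 0 := sub_ne_zero.mpr hz1
    rw [geom_sum_eq hz1] at h
    have key : z ^ n * ((aN : ℂ) * z + ((a₀ : ℝ) - aN : ℝ)) = (a₀ : ℂ) := by
      field_simp at h
      push_cast
      linear_combination h
    -- Re z < 1
    have hnsq : Complex.normSq z ≤ 1 := by
      have := Complex.sq_norm z
      nlinarith [norm_nonneg z]
    have hre : z.re < 1 := by
      by_contra hc
      push_neg at hc
      have him : z.im = 0 ∧ z.re = 1 := by
        have := Complex.normSq_apply z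
        constructor <;> nlinarith [sq_nonneg z.im]
      exact hz1 (Complex.ext him.2 (by simp [him.1]))
    set u : ℂ := (aN : ℂ) * z + ((a₀ : ℝ) - aN : ℝ) with hu
    have habs : ‖z‖ ^ n * ‖u‖ = a₀ := by
      have := congrArg (fun w : ℂ => ‖w‖) key
      simpa [norm_mul, norm_pow, Complex.norm_real, Real.norm_eq_abs, abs_of_pos (lt_trans h₂ h₁)] using this
    have husq : Complex.normSq u = aN^2 * Complex.normSq z + 2*aN*(a₀-aN)*z.re + (a₀-aN)^2 := by
      simp [hu, Complex.normSq_apply, Complex.add_re, Complex.add_im, Complex.mul_re,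
        Complex.mul_im, Complex.ofReal_re, Complex.ofReal_im]
      ring
    have hult : ‖u‖ < a₀ := by
      have h1 : ‖u‖ ^ 2 < a₀ ^ 2 := by
        rw [Complex.sq_norm, husq]
        have hc : (0:ℝ) < a₀ - aN := by linarith
        nlinarith [mul_nonneg (sq_nonneg aN) (by linarith : (0:ℝ) ≤ 1 - Complex.normSq z),
          mul_pos (mul_pos h₂ hc) (by linarith : (0:ℝ) < 1 - z.re)]
      nlinarith [norm_nonneg u]
    have hzn : ‖z‖ ^ n ≤ 1 := pow_le_one₀ (norm_nonneg z) hz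
    nlinarith [norm_nonneg u, norm_nonneg z, pow_nonneg (norm_nonneg z) n]
end

section
/- For every integer k ≥ 1 and all real numbers b₀, b_k with b₀ > b_k > 0, the polynomial q(z) = b_k·∑_{j=1}^{k} z^j + b₀ has no zeros in the closed unit disk; that is, for every complex number z with |z| ≤ 1 one has b_k·∑_{j=1}^{k} z^j + b₀ ≠ 0. -/
/-- For every integer `k ≥ 1` and all real numbers `b₀ > b_k > 0`, the polynomial
`q(z) = b_k·∑_{j=1}^{k} z^j + b₀` has no zeros in the closed unit disk. -/
theorem no_zeros_in_closed_unit_disk' (k : ℕ) (hk : 1 ≤ k) (b₀ bk : ℝ)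
    (h₁ : b₀ > bk) (h₂ : bk > 0) (z : ℂ) (hz : ‖z‖ ≤ 1) :
    (bk : ℂ) * ∑ j ∈ Finset.Icc 1 k, z ^ j + (b₀ : ℂ) ≠ 0 := by
  intro h
  -- geometric sum identity on Icc 1 k
  have hg : (∑ j ∈ Finset.Icc 1 k, z ^ j) * (z - 1) = z ^ (k + 1) - z ^ 1 := by
    rw [← Finset.Ico_add_one_right_eq_Icc]
    exact geom_sum_Ico_mul z (by omega)
  -- derive the key identity
  have h2 : (b₀ : ℂ) = ((b₀ : ℂ) - bk) * z + bk * z ^ (k + 1) := by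
    linear_combination (1 - z) * h + (bk : ℂ) * hg
  -- take real parts
  have h3 : b₀ = (b₀ - bk) * z.re + bk * (z ^ (k + 1)).re := by
    have := congrArg Complex.re h2
    simpa using this
  have hre : z.re ≤ 1 := (Complex.re_le_norm z).trans hz
  have hre2 : (z ^ (k + 1)).re ≤ 1 := by
    refine (Complex.re_le_norm _).trans ?_
    rw [norm_pow]
    exact pow_le_one₀ (norm_nonneg z) hz
  have hz1 : z.re = 1 := by nlinarith
  -- conclude z = 1
  have habs2 : z.re ^ 2 + z.im ^ 2 ≤ 1 := by
    have h4 := Complex.sq_norm z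
    rw [Complex.normSq_apply] at h4
    nlinarith [norm_nonneg z]
  have him : z.im = 0 := by nlinarith
  have hz2 : z = 1 := by
    apply Complex.ext <;> simp [hz1, him]
  subst hz2
  simp only [one_pow, Finset.sum_const, Nat.card_Icc, smul_eq_mul, mul_one] at h
  have h5 : ((bk * (k + 1 - 1) + b₀ : ℝ) : ℂ) = 0 := by push_cast; simpa using h
  rw [Complex.ofReal_eq_zero] at h5
  have hk' : (1 : ℝ) ≤ (k : ℝ) := by exact_mod_cast hk
  nlinarith [h5]
end

section
/- For every integer n ≥ 1 and every complex number w with |w| ≤ 1, one has wⁿ + 2·∑_{j=0}^{n-1} w^j ≠ 0. -/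
/-- For every integer `n ≥ 1` and every complex `w` with `|w| ≤ 1`,
`wⁿ + 2·∑_{j=0}^{n-1} w^j ≠ 0`. -/
theorem pow_add_two_mul_geom_sum_ne_zero (n : ℕ) (hn : 1 ≤ n) (w : ℂ)
    (hw : ‖w‖ ≤ 1) :
    w ^ n + 2 * ∑ j ∈ Finset.range n, w ^ j ≠ 0 := by
  intro h
  by_cases hw1 : w = 1
  · subst hw1
    simp only [one_pow, Finset.sum_const, Finset.card_range, nsmul_eq_mul, mul_one] at h
    have : (1 : ℂ) + 2 * n ≠ 0 := by
      intro h0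
      have := congrArg Complex.re h0
      simp [Complex.add_re, Complex.mul_re] at this
      nlinarith [Nat.cast_nonneg (α := ℝ) n]
    exact this h
  · have key : w ^ n * (w + 1) = 2 := by
      linear_combination (w - 1) * h - 2 * geom_sum_mul w n
    have habs : ‖w‖ ^ n * ‖w + 1‖ = 2 := by
      rw [← norm_pow, ← norm_mul, key]
      simp
    have hpow : ‖w‖ ^ n ≤ 1 := pow_le_one₀ (norm_nonneg w) hw
    have h2 : (2 : ℝ) ≤ ‖w + 1‖ := by
      nlinarith [norm_nonneg (w + 1)]
    have hsq : (4 : ℝ) ≤ ‖w + 1‖ ^ 2 := by nlinarith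
    rw [Complex.sq_norm, Complex.normSq_apply] at hsq
    have hsq2 : ‖w‖ ^ 2 ≤ 1 := by nlinarith [norm_nonneg w]
    rw [Complex.sq_norm, Complex.normSq_apply] at hsq2
    simp only [Complex.add_re, Complex.add_im, Complex.one_re, Complex.one_im, add_zero] at hsq
    have hre : w.re = 1 := by nlinarith [sq_nonneg w.im, sq_nonneg (w.re - 1)]
    have him : w.im = 0 := by nlinarith [sq_nonneg w.im]
    exact hw1 (Complex.ext (by simp [hre]) (by simp [him]))
end

section
/- Let n ≥ 1 be an integer and let I : 𝔻 → ℂ be holomorphic on 𝔻 with |I(z)| ≤ 1 for all z ∈ 𝔻. Then for every z ∈ 𝔻 the denominator (2n+1)·( I(z)ⁿ + 2·∑_{j=0}^{n-1} I(z)^j ) is nonzero, the function F̃(z) = ( −(2n−1)·I(z)ⁿ + ∑_{j=0}^{n-1} (4n − 2 − 8j)·I(z)^j ) / ( (2n+1)·( I(z)ⁿ + 2·∑_{j=0}^{n-1} I(z)^j ) ) is holomorphic on 𝔻, and there exists a constant C such that |F̃(z)| ≤ C for all z ∈ 𝔻. -/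
open Finset

lemma den_ne_aux (n : ℕ) (hn : 1 ≤ n) {w : ℂ} (hw : ‖w‖ ≤ 1) :
    w ^ n + 2 * ∑ j ∈ Finset.range n, w ^ j ≠ 0 := by
  by_cases h1 : w = 1
  · subst h1
    simp only [one_pow, Finset.sum_const, Finset.card_range, nsmul_eq_mul, mul_one]
    intro h
    have : (1 : ℂ) + 2 * n = 0 := h
    have hn' : ((1 + 2 * n : ℕ) : ℂ) = 0 := by push_cast; linear_combination this
    have := Nat.cast_eq_zero.mp hn'
    omega
  · intro h
    have hg : (∑ j ∈ Finset.range n, w ^ j) * (w - 1) = w ^ n - 1 := geom_sum_mul w n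
    have key : (1 - w) * (w ^ n + 2 * ∑ j ∈ Finset.range n, w ^ j)
        = 2 - w ^ n * (1 + w) := by linear_combination (-2 : ℂ) * hg
    rw [h, mul_zero] at key
    have h2 : w ^ n * (1 + w) = 2 := by linear_combination key
    have habs : ‖w ^ n‖ * ‖1 + w‖ = 2 := by
      rw [← norm_mul, h2]; simp
    have hwn : ‖w ^ n‖ ≤ 1 := by
      rw [norm_pow]; exact pow_le_one₀ (norm_nonneg w) hw
    have h1w : ‖1 + w‖ ≤ 2 := by
      calc ‖1 + w‖ ≤ ‖(1:ℂ)‖ + ‖w‖ := norm_add_le _ _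
        _ ≤ 2 := by simp; linarith
    have hnn1 : (0:ℝ) ≤ ‖w ^ n‖ := norm_nonneg _
    have hnn2 : (0:ℝ) ≤ ‖1 + w‖ := norm_nonneg _
    have e1 : ‖w ^ n‖ = 1 := by nlinarith
    have e2 : ‖1 + w‖ = 2 := by nlinarith
    have hw1 : ‖w‖ = 1 := by
      rw [norm_pow] at e1
      have hle : ‖w‖ ^ n ≤ ‖w‖ :=
        pow_le_of_le_one (norm_nonneg w) hw (by omega)
      rw [e1] at hle
      linarith
    have hsq : Complex.normSq (1 + w) = 4 := by
      have : ‖1 + w‖ ^ 2 = 4 := by rw [e2]; norm_num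
      rwa [Complex.sq_norm] at this
    have hsq2 : Complex.normSq w = 1 := by
      have : ‖w‖ ^ 2 = 1 := by rw [hw1]; norm_num
      rwa [Complex.sq_norm] at this
    rw [Complex.normSq_apply] at hsq hsq2
    simp only [Complex.add_re, Complex.add_im, Complex.one_re, Complex.one_im, zero_add] at hsq
    have hre : w.re = 1 := by nlinarith
    have him : w.im = 0 := by nlinarith
    exact h1 (Complex.ext (by simp [hre]) (by simp [him]))

lemma exists_min_aux (n : ℕ) (hn : 1 ≤ n) : ∃ m : ℝ, 0 < m ∧ ∀ w : ℂ, ‖w‖ ≤ 1 →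
    m ≤ ‖w ^ n + 2 * ∑ j ∈ Finset.range n, w ^ j‖ := by
  have hc : IsCompact (Metric.closedBall (0:ℂ) 1) := isCompact_closedBall _ _
  have hcont : ContinuousOn
      (fun w : ℂ => ‖w ^ n + 2 * ∑ j ∈ Finset.range n, w ^ j‖)
      (Metric.closedBall 0 1) := by
    apply Continuous.continuousOn
    apply continuous_norm.comp
    continuity
  obtain ⟨w0, hw0, hmin⟩ := hc.exists_isMinOn ⟨0, by simp⟩ hcont
  have hw0' : ‖w0‖ ≤ 1 := by
    simpa [Complex.dist_eq] using Metric.mem_closedBall.mp hw0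
  refine ⟨_, ?_, fun w hw => hmin (by simpa [Complex.dist_eq] using hw)⟩
  exact norm_pos_iff.mpr (den_ne_aux n hn hw0')

/-- For `n ≥ 1` and `I` holomorphic on the open unit disk with `|I| ≤ 1` there, the denominator
`(2n+1)(Iⁿ + 2∑_{j=0}^{n-1} I^j)` never vanishes on the disk, the function
`F̃ = (−(2n−1)Iⁿ + ∑_{j=0}^{n-1} (4n−2−8j)I^j) / ((2n+1)(Iⁿ + 2∑_{j=0}^{n-1} I^j))`
is holomorphic on the disk, and `F̃` is bounded on the disk. -/
theorem tilde_F_holomorphic_bounded (n : ℕ) (hn : 1 ≤ n) (I : ℂ → ℂ)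
    (hI : DifferentiableOn ℂ I (Metric.ball (0 : ℂ) 1))
    (hI1 : ∀ z ∈ Metric.ball (0 : ℂ) 1, ‖I z‖ ≤ 1) :
    (∀ z ∈ Metric.ball (0 : ℂ) 1,
        (2 * (n : ℂ) + 1) * ((I z) ^ n + 2 * ∑ j ∈ Finset.range n, (I z) ^ j) ≠ 0) ∧
      DifferentiableOn ℂ
        (fun z => (-(2 * (n : ℂ) - 1) * (I z) ^ n +
            ∑ j ∈ Finset.range n, (4 * (n : ℂ) - 2 - 8 * (j : ℂ)) * (I z) ^ j) /
          ((2 * (n : ℂ) + 1) * ((I z) ^ n + 2 * ∑ j ∈ Finset.range n, (I z) ^ j)))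
        (Metric.ball (0 : ℂ) 1) ∧
      ∃ C : ℝ, ∀ z ∈ Metric.ball (0 : ℂ) 1,
        ‖(-(2 * (n : ℂ) - 1) * (I z) ^ n +
            ∑ j ∈ Finset.range n, (4 * (n : ℂ) - 2 - 8 * (j : ℂ)) * (I z) ^ j) /
          ((2 * (n : ℂ) + 1) * ((I z) ^ n + 2 * ∑ j ∈ Finset.range n, (I z) ^ j))‖ ≤ C := by
  have h2n1 : (2 * (n : ℂ) + 1) ≠ 0 := by
    have : ((2 * n + 1 : ℕ) : ℂ) ≠ 0 := Nat.cast_ne_zero.mpr (by omega)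
    push_cast at this
    exact this
  have hne : ∀ z ∈ Metric.ball (0 : ℂ) 1,
      (2 * (n : ℂ) + 1) * ((I z) ^ n + 2 * ∑ j ∈ Finset.range n, (I z) ^ j) ≠ 0 :=
    fun z hz => mul_ne_zero h2n1 (den_ne_aux n hn (hI1 z hz))
  refine ⟨hne, ?_, ?_⟩
  · apply DifferentiableOn.div
    · exact DifferentiableOn.add
        ((differentiableOn_const _).mul (hI.pow n))
        (DifferentiableOn.fun_sum fun j _ => (differentiableOn_const _).mul (hI.pow j))
    · exact (differentiableOn_const _).mul
        ((hI.pow n).add ((differentiableOn_const _).mul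
          (DifferentiableOn.fun_sum fun j _ => hI.pow j)))
    · exact hne
  · obtain ⟨m, hm, hmin⟩ := exists_min_aux n hn
    set A : ℝ := ‖2 * (n : ℂ) - 1‖ +
      ∑ j ∈ Finset.range n, ‖4 * (n : ℂ) - 2 - 8 * (j : ℂ)‖ with hA
    have hA0 : 0 ≤ A := by
      apply add_nonneg (norm_nonneg _)
      exact Finset.sum_nonneg fun j _ => norm_nonneg _
    refine ⟨A / ((2 * n + 1) * m), fun z hz => ?_⟩
    have hIz := hI1 z hz
    have hnum : ‖-(2 * (n : ℂ) - 1) * (I z) ^ n +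
        ∑ j ∈ Finset.range n, (4 * (n : ℂ) - 2 - 8 * (j : ℂ)) * (I z) ^ j‖ ≤ A := by
      refine le_trans (norm_add_le _ _) ?_
      rw [hA]
      gcongr
      · rw [norm_mul, norm_neg, norm_pow]
        calc ‖2 * (n : ℂ) - 1‖ * ‖I z‖ ^ n
            ≤ ‖2 * (n : ℂ) - 1‖ * 1 :=
              mul_le_mul_of_nonneg_left (pow_le_one₀ (norm_nonneg _) hIz)
                (norm_nonneg _)
          _ = _ := mul_one _
      · refine le_trans (norm_sum_le _ _) ?_
        apply Finset.sum_le_sum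
        intro j _
        rw [norm_mul, norm_pow]
        calc ‖4 * (n : ℂ) - 2 - 8 * (j : ℂ)‖ * ‖I z‖ ^ j
            ≤ ‖4 * (n : ℂ) - 2 - 8 * (j : ℂ)‖ * 1 :=
              mul_le_mul_of_nonneg_left (pow_le_one₀ (norm_nonneg _) hIz)
                (norm_nonneg _)
          _ = _ := mul_one _
    have hden : (2 * (n : ℝ) + 1) * m ≤ 
        ‖(2 * (n : ℂ) + 1) * ((I z) ^ n + 2 * ∑ j ∈ Finset.range n, (I z) ^ j)‖ := by
      rw [norm_mul]
      have habs21 : ‖2 * (n : ℂ) + 1‖ = 2 * (n : ℝ) + 1 := by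
        have : (2 * (n : ℂ) + 1) = ((2 * n + 1 : ℕ) : ℂ) := by push_cast; ring
        rw [this, Complex.norm_natCast]; push_cast; ring
      rw [habs21]
      exact mul_le_mul_of_nonneg_left (hmin _ hIz) (by positivity)
    rw [norm_div]
    exact div_le_div₀ hA0 hnum (by positivity) hden
end

section
/- Let w be a complex number with |w| = 1 (so that 2 + w + w² ≠ 0). Then Re( (−3w² − w + 6)/(2 + w + w²) ) = 8/|2 + w + w²|². -/
/-- For `|w| = 1`: `Re((−3w² − w + 6)/(2 + w + w²)) = 8/|2 + w + w²|²`. -/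
theorem re_eq_eight_div_abs_sq (w : ℂ) (hw : ‖w‖ = 1) :
    ((-3 * w ^ 2 - w + 6) / (2 + w + w ^ 2)).re =
      8 / ‖2 + w + w ^ 2‖ ^ 2 := by
  have h1 : w.re ^ 2 + w.im ^ 2 = 1 := by
    have := Complex.sq_norm w
    rw [hw] at this
    simp [Complex.normSq_apply] at this
    nlinarith [this]
  rw [Complex.sq_norm]
  simp only [Complex.div_re, Complex.normSq_apply, pow_two, Complex.add_re, Complex.add_im,
    Complex.sub_re, Complex.sub_im, Complex.mul_re, Complex.mul_im, Complex.neg_re,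
    Complex.neg_im, Complex.re_ofNat, Complex.im_ofNat]
  rw [← add_div]
  congr 1
  linear_combination (-3 * w.re ^ 2 - 4 * w.re - 4 - 3 * w.im ^ 2) * h1
end
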